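/- Let d ≥ 2 be an integer, let D > 0, and let f : [0,D] → ℝ be a continuous function with 0 ≤ f(s) ≤ s and f(s) ≤ D − s for every s ∈ [0,D]. Then ∫₀ᴰ f(s)^{d−1} ds ≤ D^d / (2^{d−1}·d). -/

import Mathlib

open Real Set intervalIntegral

/-- Core integral estimate in the higher-dimensional Alexandrov inequality:
if `0 ≤ f(s) ≤ s` and `f(s) ≤ D - s` on `[0,D]` and `d ≥ 2`, then
`∫₀ᴰ f^(d-1) ≤ D^d / (2^(d-1) d)`. -/
theorem stmt_11 (d : ℕ) (hd : 2 ≤ d) (D : ℝ) (hD : 0 < D) (f : ℝ → ℝ)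
    (hf_cont : ContinuousOn f (Icc 0 D))
    (hf_nonneg : ∀ s ∈ Icc 0 D, 0 ≤ f s)
    (hf_le : ∀ s ∈ Icc 0 D, f s ≤ s)
    (hf_le' : ∀ s ∈ Icc 0 D, f s ≤ D - s) :
    (∫ s in (0:ℝ)..D, f s ^ (d - 1)) ≤ D ^ d / (2 ^ (d - 1) * d) := by
  set g : ℝ → ℝ := fun s => min s (D - s) with hg
  have hgc : Continuous g := by continuity
  have h1 : (∫ s in (0:ℝ)..D, f s ^ (d - 1)) ≤ ∫ s in (0:ℝ)..D, g s ^ (d - 1) := by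
    apply intervalIntegral.integral_mono_on hD.le
    · exact ((hf_cont.pow _).intervalIntegrable_of_Icc hD.le)
    · exact ((hgc.pow _).continuousOn.intervalIntegrable_of_Icc hD.le)
    · intro s hs
      exact pow_le_pow_left₀ (hf_nonneg s hs) (le_min (hf_le s hs) (hf_le' s hs)) _
  have hsplit : (∫ s in (0:ℝ)..D, g s ^ (d - 1)) =
      (∫ s in (0:ℝ)..(D/2), g s ^ (d - 1)) + ∫ s in (D/2)..D, g s ^ (d - 1) := by
    rw [intervalIntegral.integral_add_adjacent_intervals] <;>
      exact (hgc.pow _).intervalIntegrable _ _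
  have h2 : (∫ s in (0:ℝ)..(D/2), g s ^ (d - 1)) = ∫ s in (0:ℝ)..(D/2), s ^ (d - 1) := by
    apply intervalIntegral.integral_congr
    intro s hs
    rw [uIcc_of_le (by linarith)] at hs
    have : s ≤ D - s := by
      have := hs.2; have := hs.1; linarith
    simp [hg, min_eq_left this]
  have h3 : (∫ s in (D/2)..D, g s ^ (d - 1)) = ∫ s in (D/2)..D, (D - s) ^ (d - 1) := by
    apply intervalIntegral.integral_congr
    intro s hs
    rw [uIcc_of_le (by linarith)] at hs
    have : D - s ≤ s := by
      have := hs.2; have := hs.1; linarith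
    simp [hg, min_eq_right this]
  have hd1 : d - 1 + 1 = d := by omega
  have hcast : ((d - 1 : ℕ) : ℝ) + 1 = d := by
    rw [Nat.cast_sub (by omega : 1 ≤ d)]; push_cast; ring
  have h4 : (∫ s in (D/2)..D, (D - s) ^ (d - 1)) = ∫ s in (0:ℝ)..(D/2), s ^ (d - 1) := by
    rw [intervalIntegral.integral_comp_sub_left (fun x => x ^ (d - 1)) D,
      show D - D = (0:ℝ) by ring, show D - D/2 = D/2 by ring]
  have h5 : (∫ s in (0:ℝ)..(D/2), s ^ (d - 1)) = (D/2) ^ d / d := by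
    rw [integral_pow, hd1]
    simp [hcast, zero_pow (by omega : d ≠ 0)]
  have hdpos : (0:ℝ) < d := by positivity
  have key : (∫ s in (0:ℝ)..D, g s ^ (d - 1)) = D ^ d / (2 ^ (d - 1) * d) := by
    rw [hsplit, h2, h3, h4, h5]
    rw [div_pow]
    have h2d : (2:ℝ) ^ d = 2 * 2 ^ (d - 1) := by
      rw [← pow_succ']
      congr 1
      omega
    field_simp [h2d]
    ring_nf
    rw [h2d]; ring
  linarith [h1, key.le, key.ge]
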